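/- Every exchange matrix B of a cluster algebra of finite type has a companion basis. -/

import Mathlib

namespace ClusterReflection

variable {n : ℕ}

/-- A square integer matrix `B` is skew-symmetrisable if `D * B` is skew-symmetric for some
diagonal matrix `D` with positive diagonal entries. -/
def IsSkewSymmetrizable (B : Matrix (Fin n) (Fin n) ℤ) : Prop :=
  ∃ d : Fin n → ℤ, (∀ i, 0 < d i) ∧ ∀ i j, d i * B i j = -(d j * B j i)

/-- Fomin-Zelevinsky matrix mutation in direction `k`. -/
def mutate (k : Fin n) (B : Matrix (Fin n) (Fin n) ℤ) : Matrix (Fin n) (Fin n) ℤ :=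
  Matrix.of fun i j =>
    if i = k ∨ j = k then -B i j
    else B i j + (|B i k| * B k j + B i k * |B k j|) / 2

/-- One-step mutation relation. -/
def Mutation (X Y : Matrix (Fin n) (Fin n) ℤ) : Prop := ∃ k, Y = mutate k X

/-- `B` is of finite type (2-finite) if every matrix obtained from it by a finite sequence of
mutations has `|B'_{ij} B'_{ji}| ≤ 3` for all `i, j`. -/
def IsFiniteType (B : Matrix (Fin n) (Fin n) ℤ) : Prop :=
  ∀ B', Relation.ReflTransGen Mutation B B' → ∀ i j, |B' i j * B' j i| ≤ 3

open RealInnerProductSpace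

/-- The pairing `(β, α^∨) = 2⟪β, α⟫/⟪α, α⟫` of a vector with the coroot of `α`. -/
noncomputable def pairing (β α : EuclideanSpace ℝ (Fin n)) : ℝ :=
  2 * ⟪β, α⟫ / ⟪α, α⟫

/-- The reflection `s_α(v) = v - (v, α^∨) α` in the root `α`. -/
noncomputable def reflRoot (α v : EuclideanSpace ℝ (Fin n)) : EuclideanSpace ℝ (Fin n) :=
  v - pairing v α • α

/-- `Φ` is a finite crystallographic root system of rank `n` in `ℝ^n`. -/
def IsRootSystem (Φ : Set (EuclideanSpace ℝ (Fin n))) : Prop :=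
  Φ.Finite ∧ (∀ α ∈ Φ, α ≠ 0) ∧ Submodule.span ℝ Φ = ⊤ ∧
  (∀ α ∈ Φ, ∀ t : ℝ, t • α ∈ Φ → t = 1 ∨ t = -1) ∧
  (∀ α ∈ Φ, ∀ β ∈ Φ, reflRoot α β ∈ Φ) ∧
  (∀ α ∈ Φ, ∀ β ∈ Φ, ∃ z : ℤ, pairing β α = z)

/-- `α` lists a base (system of simple roots) of the root system `Φ`. -/
def IsBase (Φ : Set (EuclideanSpace ℝ (Fin n)))
    (α : Fin n → EuclideanSpace ℝ (Fin n)) : Prop :=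
  (∀ i, α i ∈ Φ) ∧ LinearIndependent ℝ α ∧
  ∀ γ ∈ Φ, ∃ c : Fin n → ℤ, γ = ∑ i, (c i : ℝ) • α i ∧ ((∀ i, 0 ≤ c i) ∨ (∀ i, c i ≤ 0))

/-- The Cartan counterpart `A(B)` of a skew-symmetrisable matrix `B`. -/
def cartanCounterpart (B : Matrix (Fin n) (Fin n) ℤ) : Matrix (Fin n) (Fin n) ℤ :=
  Matrix.of fun i j => if i = j then 2 else -|B i j|

/-- `B` is an exchange matrix of the cluster algebra of finite type whose root system is `Φ`:
it is skew-symmetrisable of finite type and mutation-equivalent to a matrix whose Cartan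
counterpart is the Cartan matrix of the corresponding Dynkin diagram, i.e. the matrix of
pairings `(α_i, α_j^∨)` of a base of `Φ`. -/
def IsExchangeMatrix (Φ : Set (EuclideanSpace ℝ (Fin n)))
    (B : Matrix (Fin n) (Fin n) ℤ) : Prop :=
  IsSkewSymmetrizable B ∧ IsFiniteType B ∧
  ∃ B₀ : Matrix (Fin n) (Fin n) ℤ, Relation.ReflTransGen Mutation B B₀ ∧
    ∃ α : Fin n → EuclideanSpace ℝ (Fin n), IsBase Φ α ∧
      ∀ i j, (cartanCounterpart B₀ i j : ℝ) = pairing (α i) (α j)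

/-- `β` is a companion basis for `B`: a family of roots forming a `ℤ`-basis of the root
lattice `ℤΦ` with `|(β_i, β_j^∨)| = |B_{ij}|` for all `i ≠ j`. -/
def IsCompanionBasis (Φ : Set (EuclideanSpace ℝ (Fin n))) (B : Matrix (Fin n) (Fin n) ℤ)
    (β : Fin n → EuclideanSpace ℝ (Fin n)) : Prop :=
  (∀ i, β i ∈ Φ) ∧ LinearIndependent ℤ β ∧
  Submodule.span ℤ (Set.range β) = Submodule.span ℤ Φ ∧
  ∀ i j, i ≠ j → |pairing (β i) (β j)| = |(B i j : ℝ)|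

/-- The inward mutation `μ_k(𝓑)` of a companion basis: `β_i` is replaced by `s_{β_k}(β_i)`
whenever there is an arrow `i → k` in `Γ(B)` (i.e. `B_{ik} > 0`), and unchanged otherwise. -/
noncomputable def mutateBasis (B : Matrix (Fin n) (Fin n) ℤ) (k : Fin n)
    (β : Fin n → EuclideanSpace ℝ (Fin n)) : Fin n → EuclideanSpace ℝ (Fin n) :=
  fun i => if 0 < B i k then reflRoot (β k) (β i) else β i

lemma half_nn_nn {a b : ℤ} (ha : 0 ≤ a) (hb : 0 ≤ b) : (|a| * b + a * |b|) / 2 = a * b := by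
  rw [abs_of_nonneg ha, abs_of_nonneg hb]
  have : a * b + a * b = 2 * (a * b) := by ring
  rw [this, Int.mul_ediv_cancel_left _ two_ne_zero]

lemma half_nn_np {a b : ℤ} (ha : 0 ≤ a) (hb : b ≤ 0) : (|a| * b + a * |b|) / 2 = 0 := by
  rw [abs_of_nonneg ha, abs_of_nonpos hb]
  have : a * b + a * -b = 0 := by ring
  rw [this]; rfl

lemma half_np_nn {a b : ℤ} (ha : a ≤ 0) (hb : 0 ≤ b) : (|a| * b + a * |b|) / 2 = 0 := by
  rw [abs_of_nonpos ha, abs_of_nonneg hb]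
  have : -a * b + a * b = 0 := by ring
  rw [this]; rfl

lemma half_np_np {a b : ℤ} (ha : a ≤ 0) (hb : b ≤ 0) : (|a| * b + a * |b|) / 2 = -(a * b) := by
  rw [abs_of_nonpos ha, abs_of_nonpos hb]
  have : -a * b + a * -b = 2 * (-(a*b)) := by ring
  rw [this, Int.mul_ediv_cancel_left _ two_ne_zero]

lemma half_even (a b : ℤ) : ∃ t, |a| * b + a * |b| = 2 * t := by
  rcases abs_choice a with h | h <;> rcases abs_choice b with h' | h' <;> rw [h, h']
  · exact ⟨a*b, by ring⟩
  · exact ⟨0, by ring⟩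
  · exact ⟨0, by ring⟩
  · exact ⟨-(a*b), by ring⟩

lemma mutate_apply_ne {k i j : Fin n} (B : Matrix (Fin n) (Fin n) ℤ)
    (hi : i ≠ k) (hj : j ≠ k) :
    mutate k B i j = B i j + (|B i k| * B k j + B i k * |B k j|) / 2 := by
  simp [mutate, hi, hj]

lemma mutate_apply_k {k i j : Fin n} (B : Matrix (Fin n) (Fin n) ℤ)
    (h : i = k ∨ j = k) : mutate k B i j = -B i j := by
  simp [mutate, h]

lemma mutate_mutate (k : Fin n) (B : Matrix (Fin n) (Fin n) ℤ) :
    mutate k (mutate k B) = B := by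
  ext i j
  by_cases h : i = k ∨ j = k
  · rw [mutate_apply_k _ h, mutate_apply_k _ h, neg_neg]
  · push_neg at h
    rw [mutate_apply_ne _ h.1 h.2, mutate_apply_ne _ h.1 h.2,
      mutate_apply_k (B := B) (Or.inr rfl), mutate_apply_k (B := B) (Or.inl rfl)]
    obtain ⟨t, ht⟩ := half_even (B i k) (B k j)
    have h2 : |(-B i k)| * (-B k j) + (-B i k) * |(-B k j)| = 2 * (-t) := by
      rw [abs_neg, abs_neg]; linarith [ht]
    rw [ht, h2, Int.mul_ediv_cancel_left _ two_ne_zero,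
      Int.mul_ediv_cancel_left _ two_ne_zero]
    ring

-- diag zero
lemma diag_zero {B : Matrix (Fin n) (Fin n) ℤ} (h : IsSkewSymmetrizable B) (k : Fin n) :
    B k k = 0 := by
  obtain ⟨d, hd, hB⟩ := h
  have := hB k k
  have hdk := (hd k).ne'
  have : d k * B k k = 0 := by linarith
  rcases mul_eq_zero.mp this with h | h
  · exact absurd h hdk
  · exact h

-- sign flip
lemma sign_flip {B : Matrix (Fin n) (Fin n) ℤ} {d : Fin n → ℤ} (hd : ∀ i, 0 < d i)
    (hB : ∀ i j, d i * B i j = -(d j * B j i)) {i j : Fin n} (h : 0 < B i j) :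
    B j i < 0 := by
  have h1 : d j * B j i = -(d i * B i j) := by linarith [hB i j]
  have h2 : 0 < d i * B i j := mul_pos (hd i) h
  nlinarith [hd j]

lemma sign_flip' {B : Matrix (Fin n) (Fin n) ℤ} {d : Fin n → ℤ} (hd : ∀ i, 0 < d i)
    (hB : ∀ i j, d i * B i j = -(d j * B j i)) {i j : Fin n} (h : B i j < 0) :
    0 < B j i := by
  have h1 : d j * B j i = -(d i * B i j) := by linarith [hB i j]
  have h2 : d i * B i j < 0 := mul_neg_of_pos_of_neg (hd i) h
  nlinarith [hd j]

lemma sign_zero {B : Matrix (Fin n) (Fin n) ℤ} {d : Fin n → ℤ} (hd : ∀ i, 0 < d i)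
    (hB : ∀ i j, d i * B i j = -(d j * B j i)) {i j : Fin n} (h : B i j = 0) :
    B j i = 0 := by
  have h1 := hB i j
  rw [h, mul_zero] at h1
  have : d j * B j i = 0 := by linarith
  rcases mul_eq_zero.mp this with h' | h'
  · exact absurd h' (hd j).ne'
  · exact h'

lemma isSkewSymmetrizable_mutate {B : Matrix (Fin n) (Fin n) ℤ}
    (h : IsSkewSymmetrizable B) (k : Fin n) : IsSkewSymmetrizable (mutate k B) := by
  obtain ⟨d, hd, hB⟩ := h
  refine ⟨d, hd, fun i j => ?_⟩
  by_cases hk : i = k ∨ j = k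
  · have hk' : j = k ∨ i = k := hk.symm
    rw [mutate_apply_k _ hk, mutate_apply_k _ hk']
    have := hB i j
    ring_nf
    linarith
  · push_neg at hk
    rw [mutate_apply_ne _ hk.1 hk.2, mutate_apply_ne _ hk.2 hk.1]
    have key : d i * (B i k * B k j) = d j * (B j k * B k i) := by
      have h1 := hB i k
      have h2 := hB k j
      have : d k * (d i * (B i k * B k j)) = d k * (d j * (B j k * B k i)) := by
        linear_combination (d k * B k j) * h1 - (d k * B k i) * h2
      exact mul_left_cancel₀ (hd k).ne' this
    rcases lt_trichotomy (B i k) 0 with hik | hik | hik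
    · have hki : 0 < B k i := sign_flip' hd hB hik
      rcases lt_trichotomy (B k j) 0 with hkj | hkj | hkj
      · have hjk : 0 < B j k := sign_flip' hd hB hkj
        rw [half_np_np hik.le hkj.le, half_nn_nn hjk.le hki.le]
        have := hB i j
        nlinarith [key]
      · rw [hkj, sign_zero hd hB hkj]
        simp only [abs_zero, mul_zero, zero_mul, add_zero, zero_add, Int.zero_ediv]
        linarith [hB i j]
      · have hjk : B j k < 0 := sign_flip hd hB hkj
        rw [half_np_nn hik.le hkj.le, half_np_nn hjk.le hki.le]
        have := hB i j
        linarith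
    · rw [hik, sign_zero hd hB hik]
      simp only [abs_zero, mul_zero, zero_mul, add_zero, zero_add, Int.zero_ediv]
      linarith [hB i j]
    · have hki : B k i < 0 := sign_flip hd hB hik
      rcases lt_trichotomy (B k j) 0 with hkj | hkj | hkj
      · have hjk : 0 < B j k := sign_flip' hd hB hkj
        rw [half_nn_np hik.le hkj.le, half_nn_np hjk.le hki.le]
        have := hB i j
        linarith
      · rw [hkj, sign_zero hd hB hkj]
        simp only [abs_zero, mul_zero, zero_mul, add_zero, zero_add, Int.zero_ediv]
        linarith [hB i j]
      · have hjk : B j k < 0 := sign_flip hd hB hkj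
        rw [half_nn_nn hik.le hkj.le, half_np_np hjk.le hki.le]
        have := hB i j
        nlinarith [key]


lemma no_source_triangle {B : Matrix (Fin n) (Fin n) ℤ}
    (hs : IsSkewSymmetrizable B) (hfin : IsFiniteType B) {i j k : Fin n}
    (hij : i ≠ j) (hik : i ≠ k) (hjk : j ≠ k)
    (h1 : 0 < B i j) (h2 : 0 < B i k) (h3 : 0 < B k j) : False := by
  obtain ⟨d, hd, hB⟩ := hs
  have hji : B j i < 0 := sign_flip hd hB h1
  have hki : B k i < 0 := sign_flip hd hB h2
  have hjk' : B j k < 0 := sign_flip hd hB h3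
  have e1 : mutate k B i j = B i j + B i k * B k j := by
    rw [mutate_apply_ne _ hik hjk, half_nn_nn h2.le h3.le]
  have e2 : mutate k B j i = B j i - B j k * B k i := by
    rw [mutate_apply_ne _ hjk hik, half_np_np hjk'.le hki.le]; ring
  have hbound := hfin (mutate k B) (Relation.ReflTransGen.single ⟨k, rfl⟩) i j
  rw [e1, e2] at hbound
  have p1 : 2 ≤ B i j + B i k * B k j := by nlinarith
  have p2 : B j i - B j k * B k i ≤ -2 := by nlinarith
  have : (B i j + B i k * B k j) * (B j i - B j k * B k i) ≤ -4 := by nlinarith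
  rw [abs_of_nonpos (by linarith)] at hbound
  linarith

lemma isFiniteType_mutate {B : Matrix (Fin n) (Fin n) ℤ} (h : IsFiniteType B) (k : Fin n) :
    IsFiniteType (mutate k B) :=
  fun B' hB' => h B' (Relation.ReflTransGen.head ⟨k, rfl⟩ hB')


lemma inner_self_pos' {x : EuclideanSpace ℝ (Fin n)} (hx : x ≠ 0) : 0 < ⟪x, x⟫ :=
  lt_of_le_of_ne real_inner_self_nonneg (fun h => hx (inner_self_eq_zero.mp h.symm))

lemma pairing_self {x : EuclideanSpace ℝ (Fin n)} (hx : x ≠ 0) : pairing x x = 2 := by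
  have hg := (inner_self_pos' hx).ne'
  rw [pairing, mul_div_assoc, div_self hg, mul_one]

lemma inner_reflRoot_left (γ x y : EuclideanSpace ℝ (Fin n)) :
    ⟪reflRoot γ x, y⟫ = ⟪x, y⟫ - pairing x γ * ⟪γ, y⟫ := by
  rw [reflRoot, inner_sub_left, real_inner_smul_left]

lemma inner_reflRoot_reflRoot {γ : EuclideanSpace ℝ (Fin n)} (hγ : γ ≠ 0)
    (x y : EuclideanSpace ℝ (Fin n)) : ⟪reflRoot γ x, reflRoot γ y⟫ = ⟪x, y⟫ := by
  have hg := (inner_self_pos' hγ).ne'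
  simp only [reflRoot, pairing, inner_sub_left, inner_sub_right, real_inner_smul_left,
    real_inner_smul_right, real_inner_comm γ x, real_inner_comm γ y]
  generalize ⟪x, y⟫ = A
  generalize ⟪x, γ⟫ = B
  generalize ⟪y, γ⟫ = C
  revert hg
  generalize ⟪γ, γ⟫ = g
  intro hg
  field_simp
  ring

lemma pairing_reflRoot_left {γ y : EuclideanSpace ℝ (Fin n)} (hγ : γ ≠ 0) (hy : y ≠ 0)
    (x : EuclideanSpace ℝ (Fin n)) :
    pairing (reflRoot γ x) y = pairing x y - pairing x γ * pairing γ y := by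
  have hg := (inner_self_pos' hγ).ne'
  have hyy := (inner_self_pos' hy).ne'
  simp only [pairing, inner_reflRoot_left, pairing, real_inner_comm γ x]
  generalize ⟪x, y⟫ = A
  generalize ⟪x, γ⟫ = B
  generalize ⟪γ, y⟫ = C
  revert hg hyy
  generalize ⟪γ, γ⟫ = g
  generalize ⟪y, y⟫ = w
  intro hg hyy
  field_simp

lemma inner_reflRoot_right {γ : EuclideanSpace ℝ (Fin n)} (hγ : γ ≠ 0)
    (x y : EuclideanSpace ℝ (Fin n)) : ⟪x, reflRoot γ y⟫ = ⟪reflRoot γ x, y⟫ := by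
  rw [reflRoot, reflRoot, inner_sub_right, inner_sub_left, real_inner_smul_right,
    real_inner_smul_left, pairing, pairing, real_inner_comm γ y]
  ring

lemma pairing_reflRoot_right {γ y : EuclideanSpace ℝ (Fin n)} (hγ : γ ≠ 0) (hy : y ≠ 0)
    (x : EuclideanSpace ℝ (Fin n)) :
    pairing x (reflRoot γ y) = pairing x y - pairing x γ * pairing γ y := by
  have h1 := inner_reflRoot_right hγ x y
  have h2 := inner_reflRoot_reflRoot hγ y y
  have h3 : pairing x (reflRoot γ y) = pairing (reflRoot γ x) y := by
    rw [pairing, pairing, h1, h2]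
  rw [h3, pairing_reflRoot_left hγ hy]

lemma pairing_reflRoot_reflRoot {γ y : EuclideanSpace ℝ (Fin n)} (hγ : γ ≠ 0)
    (x : EuclideanSpace ℝ (Fin n)) :
    pairing (reflRoot γ x) (reflRoot γ y) = pairing x y := by
  rw [pairing, inner_reflRoot_reflRoot hγ, inner_reflRoot_reflRoot hγ, pairing]

lemma reflRoot_self {γ : EuclideanSpace ℝ (Fin n)} (hγ : γ ≠ 0) : reflRoot γ γ = -γ := by
  rw [reflRoot, pairing_self hγ, two_smul]
  abel

lemma pairing_neg_left (x y : EuclideanSpace ℝ (Fin n)) : pairing (-x) y = -pairing x y := by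
  rw [pairing, pairing, inner_neg_left]
  ring

lemma pairing_mul_symm_nonneg (x y : EuclideanSpace ℝ (Fin n)) :
    0 ≤ pairing x y * pairing y x := by
  rw [pairing, pairing, div_mul_div_comm, real_inner_comm y x]
  apply div_nonneg
  · nlinarith [sq_nonneg ⟪x, y⟫]
  · exact mul_nonneg real_inner_self_nonneg real_inner_self_nonneg


lemma pairing_bounds {x y : EuclideanSpace ℝ (Fin n)} (hx : x ≠ 0) (hy : y ≠ 0)
    (hl : 1 ≤ pairing x y * pairing y x) (hu : pairing x y * pairing y x ≤ 3) :
    ⟪x, x⟫ * ⟪y, y⟫ ≤ 4 * ⟪x, y⟫ ^ 2 ∧ 4 * ⟪x, y⟫ ^ 2 ≤ 3 * (⟪x, x⟫ * ⟪y, y⟫) := by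
  have ha := inner_self_pos' hx
  have hb := inner_self_pos' hy
  rw [pairing, pairing, real_inner_comm x y, div_mul_div_comm] at hl hu
  have hpos : (0:ℝ) < ⟪y, y⟫ * ⟪x, x⟫ := mul_pos hb ha
  have h1 := (one_le_div hpos).mp hl
  have h2 := (div_le_iff₀ hpos).mp hu
  constructor <;> nlinarith

set_option maxHeartbeats 1000000 in
lemma sign_cycle {x y z : EuclideanSpace ℝ (Fin n)}
    (hind : LinearIndependent ℝ ![x, y, z])
    (h1l : 1 ≤ pairing x y * pairing y x) (h1u : pairing x y * pairing y x ≤ 3)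
    (h2l : 1 ≤ pairing y z * pairing z y) (h2u : pairing y z * pairing z y ≤ 3)
    (h3l : 1 ≤ pairing z x * pairing x z) (h3u : pairing z x * pairing x z ≤ 3) :
    0 < pairing x y * pairing y z * pairing z x := by
  have hx : x ≠ 0 := by have := hind.ne_zero 0; simpa using this
  have hy : y ≠ 0 := by have := hind.ne_zero 1; simpa using this
  have hz : z ≠ 0 := by have := hind.ne_zero 2; simpa using this
  have ha := inner_self_pos' hx
  have hb := inner_self_pos' hy
  have hc := inner_self_pos' hz
  obtain ⟨hX1, hX2⟩ := pairing_bounds hx hy h1l h1u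
  obtain ⟨hY1, hY2⟩ := pairing_bounds hy hz h2l h2u
  obtain ⟨hZ1, hZ2⟩ := pairing_bounds hz hx h3l h3u
  have key : 0 < ⟪x, y⟫ * ⟪y, z⟫ * ⟪z, x⟫ := by
    set a := (⟪x, x⟫ : ℝ) with ha_def
    set b := (⟪y, y⟫ : ℝ) with hb_def
    set c := (⟪z, z⟫ : ℝ) with hc_def
    set X := (⟪x, y⟫ : ℝ) with hX_def
    set Y := (⟪y, z⟫ : ℝ) with hY_def
    set Z := (⟪z, x⟫ : ℝ) with hZ_def
    by_contra hcon
    push_neg at hcon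
    have hXne : X ≠ 0 := by intro h; rw [h] at hX1; nlinarith
    have hYne : Y ≠ 0 := by intro h; rw [h] at hY1; nlinarith
    have hZne : Z ≠ 0 := by intro h; rw [h] at hZ1; nlinarith
    have hlt : X * Y * Z < 0 :=
      lt_of_le_of_ne hcon (mul_ne_zero (mul_ne_zero hXne hYne) hZne)
    have hexp : ⟪(X*Y - b*Z) • x + (X*Z - a*Y) • y + (a*b - X^2) • z,
        (X*Y - b*Z) • x + (X*Z - a*Y) • y + (a*b - X^2) • z⟫ =
        (X*Y - b*Z)*(X*Y - b*Z)*a + (X*Z - a*Y)*(X*Z - a*Y)*b + (a*b - X^2)*(a*b - X^2)*c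
        + 2*((X*Y - b*Z)*(X*Z - a*Y))*X + 2*((X*Y - b*Z)*(a*b - X^2))*Z
        + 2*((X*Z - a*Y)*(a*b - X^2))*Y := by
      simp only [inner_add_left, inner_add_right, real_inner_smul_left, real_inner_smul_right]
      rw [real_inner_comm x y, real_inner_comm z x, real_inner_comm y z,
        ← ha_def, ← hb_def, ← hc_def, ← hX_def, ← hY_def, ← hZ_def]
      ring
    have m1 : (a*b)*(b*c) ≤ (4*X^2)*(4*Y^2) :=
      mul_le_mul hX1 hY1 (by positivity) (by positivity)
    have m2 : ((a*b)*(b*c))*(c*a) ≤ ((4*X^2)*(4*Y^2))*(4*Z^2) :=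
      mul_le_mul m1 hZ1 (by positivity) (by positivity)
    have habc : 0 < a * b * c := mul_pos (mul_pos ha hb) hc
    have hsq : (a*b*c)^2 ≤ 64 * (X*Y*Z)^2 := by
      calc (a*b*c)^2 = ((a*b)*(b*c))*(c*a) := by ring
        _ ≤ ((4*X^2)*(4*Y^2))*(4*Z^2) := m2
        _ = 64 * (X*Y*Z)^2 := by ring
    have h8 : X*Y*Z ≤ -(a*b*c)/8 := by
      nlinarith [hsq, hlt, habc, sq_nonneg (8*(X*Y*Z) + a*b*c)]
    have hdet : a*b*c + 2*(X*Y*Z) - a*Y^2 - b*Z^2 - c*X^2 ≤ 0 := by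
      nlinarith [h8, mul_le_mul_of_nonneg_left hY1 ha.le,
        mul_le_mul_of_nonneg_left hZ1 hb.le, mul_le_mul_of_nonneg_left hX1 hc.le]
    have hc3pos : (0:ℝ) < a*b - X^2 := by nlinarith
    have hle : ⟪(X*Y - b*Z) • x + (X*Z - a*Y) • y + (a*b - X^2) • z,
        (X*Y - b*Z) • x + (X*Z - a*Y) • y + (a*b - X^2) • z⟫ ≤ 0 := by
      rw [hexp]
      have hww : (X*Y - b*Z)*(X*Y - b*Z)*a + (X*Z - a*Y)*(X*Z - a*Y)*b
          + (a*b - X^2)*(a*b - X^2)*c + 2*((X*Y - b*Z)*(X*Z - a*Y))*X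
          + 2*((X*Y - b*Z)*(a*b - X^2))*Z + 2*((X*Z - a*Y)*(a*b - X^2))*Y
          = (a*b - X^2) * (a*b*c + 2*(X*Y*Z) - a*Y^2 - b*Z^2 - c*X^2) := by ring
      rw [hww]
      exact mul_nonpos_of_nonneg_of_nonpos hc3pos.le hdet
    have hzero : (X*Y - b*Z) • x + (X*Z - a*Y) • y + (a*b - X^2) • z = 0 :=
      inner_self_eq_zero.mp (le_antisymm hle real_inner_self_nonneg)
    have hsum : ∑ i : Fin 3, (![X*Y - b*Z, X*Z - a*Y, a*b - X^2]) i • (![x, y, z]) i = 0 := by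
      rw [Fin.sum_univ_three]
      simpa using hzero
    have h2 := Fintype.linearIndependent_iff.mp hind ![X*Y - b*Z, X*Z - a*Y, a*b - X^2] hsum 2
    simp only [Matrix.cons_val_two, Matrix.tail_cons, Matrix.head_cons] at h2
    exact hc3pos.ne' h2
  rw [pairing, pairing, pairing]
  have h8 : 2*⟪x,y⟫/⟪y,y⟫ * (2*⟪y,z⟫/⟪z,z⟫) * (2*⟪z,x⟫/⟪x,x⟫)
      = 8*(⟪x,y⟫*⟪y,z⟫*⟪z,x⟫)/(⟪x,x⟫*(⟪y,y⟫*⟪z,z⟫)) := by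
    field_simp
    ring
  rw [h8]
  exact div_pos (by linarith) (mul_pos ha (mul_pos hb hc))

lemma abs_sub_same_sign {u v : ℝ} (h : 0 < u * v) : |u - v| = |(|u| - |v|)| := by
  rcases mul_pos_iff.mp h with ⟨h1, h2⟩ | ⟨h1, h2⟩
  · rw [abs_of_pos h1, abs_of_pos h2]
  · rw [abs_of_neg h1, abs_of_neg h2, show -u - -v = -(u - v) by ring, abs_neg]

lemma indep_of_span_eq {Φ : Set (EuclideanSpace ℝ (Fin n))}
    (hspanΦ : Submodule.span ℝ Φ = ⊤) {v : Fin n → EuclideanSpace ℝ (Fin n)}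
    (hs : Submodule.span ℤ (Set.range v) = Submodule.span ℤ Φ) :
    LinearIndependent ℝ v := by
  apply linearIndependent_of_top_le_span_of_card_eq_finrank
  · have hsub : Φ ⊆ ↑(Submodule.span ℝ (Set.range v)) := by
      intro φ hφ
      have h1 : φ ∈ Submodule.span ℤ (Set.range v) := by
        rw [hs]; exact Submodule.subset_span hφ
      exact Submodule.span_le_restrictScalars ℤ ℝ (Set.range v) h1
    calc (⊤ : Submodule ℝ (EuclideanSpace ℝ (Fin n))) = Submodule.span ℝ Φ := hspanΦ.symm
      _ ≤ Submodule.span ℝ (Set.range v) := Submodule.span_le.mpr hsub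
  · simp [finrank_euclideanSpace_fin]

lemma zsmul_one_inj : Function.Injective fun r : ℤ => r • (1 : ℝ) := by
  intro a b h
  simp only [zsmul_eq_mul, mul_one] at h
  exact_mod_cast h

lemma zindep_of_span_eq {Φ : Set (EuclideanSpace ℝ (Fin n))}
    (hspanΦ : Submodule.span ℝ Φ = ⊤) {v : Fin n → EuclideanSpace ℝ (Fin n)}
    (hs : Submodule.span ℤ (Set.range v) = Submodule.span ℤ Φ) :
    LinearIndependent ℤ v :=
  LinearIndependent.restrict_scalars zsmul_one_inj (indep_of_span_eq hspanΦ hs)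

lemma inj3 {i j k : Fin n} (hij : i ≠ j) (hik : i ≠ k) (hjk : j ≠ k) :
    Function.Injective ![i, j, k] := by
  intro a b h
  fin_cases a <;> fin_cases b <;> simp_all <;>
    first
      | rfl
      | exact absurd h hij | exact absurd h hik | exact absurd h hjk
      | exact absurd h.symm hij | exact absurd h.symm hik | exact absurd h.symm hjk

lemma cartan_apply_ne {B : Matrix (Fin n) (Fin n) ℤ} {i j : Fin n} (hij : i ≠ j) :
    cartanCounterpart B i j = -|B i j| := by
  simp [cartanCounterpart, hij]

lemma base_companion {Φ : Set (EuclideanSpace ℝ (Fin n))} (hΦ : IsRootSystem Φ)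
    {B₀ : Matrix (Fin n) (Fin n) ℤ} {α : Fin n → EuclideanSpace ℝ (Fin n)}
    (hbase : IsBase Φ α)
    (hc : ∀ i j, ((cartanCounterpart B₀ i j : ℤ) : ℝ) = pairing (α i) (α j)) :
    IsCompanionBasis Φ B₀ α := by
  obtain ⟨hmem, hindR, hgen⟩ := hbase
  have hspan : Submodule.span ℤ (Set.range α) = Submodule.span ℤ Φ := by
    apply le_antisymm
    · apply Submodule.span_le.mpr
      rintro _ ⟨i, rfl⟩
      exact Submodule.subset_span (hmem i)
    · apply Submodule.span_le.mpr
      intro γ hγ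
      obtain ⟨c, hcsum, -⟩ := hgen γ hγ
      rw [hcsum]
      apply Submodule.sum_mem
      intro i _
      rw [Int.cast_smul_eq_zsmul]
      exact Submodule.smul_mem _ _ (Submodule.subset_span ⟨i, rfl⟩)
  refine ⟨hmem, LinearIndependent.restrict_scalars zsmul_one_inj hindR, hspan, ?_⟩
  intro i j hij
  rw [← hc i j, cartan_apply_ne hij]
  push_cast
  rw [abs_neg, abs_abs]

set_option maxHeartbeats 1000000 in
lemma mixed_core {u v w : EuclideanSpace ℝ (Fin n)}
    (hind : LinearIndependent ℝ ![u, v, w])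
    {p p' q q' r r' : ℤ}
    (hp : |pairing u v| = |(p : ℝ)|) (hp' : |pairing v u| = |(p' : ℝ)|)
    (hq : |pairing u w| = |(q : ℝ)|) (hq' : |pairing w u| = |(q' : ℝ)|)
    (hr : |pairing w v| = |(r : ℝ)|) (hr' : |pairing v w| = |(r' : ℝ)|)
    (hpne : p ≠ 0) (hp'ne : p' ≠ 0) (hqne : q ≠ 0) (hq'ne : q' ≠ 0)
    (hrne : r ≠ 0) (hr'ne : r' ≠ 0)
    (hb1 : |p * p'| ≤ 3) (hb2 : |q' * q| ≤ 3) (hb3 : |r' * r| ≤ 3) :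
    |pairing u v - pairing u w * pairing w v| = |(|(p : ℝ)| - |(q : ℝ) * (r : ℝ)|)| := by
  have prod_eq : ∀ (x y : EuclideanSpace ℝ (Fin n)) (s t : ℤ),
      |pairing x y| = |(s : ℝ)| → |pairing y x| = |(t : ℝ)| →
      pairing x y * pairing y x = |(s * t : ℤ)| := by
    intro x y s t hs ht
    have h0 := pairing_mul_symm_nonneg x y
    rw [← abs_of_nonneg h0, abs_mul, hs, ht]
    push_cast
    rw [abs_mul]
  have e1 : pairing u v * pairing v u = |(p * p' : ℤ)| := prod_eq u v p p' hp hp'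
  have e2 : pairing v w * pairing w v = |(r' * r : ℤ)| := prod_eq v w r' r hr' hr
  have e3 : pairing w u * pairing u w = |(q' * q : ℤ)| := prod_eq w u q' q hq' hq
  have lb : ∀ s t : ℤ, s ≠ 0 → t ≠ 0 → (1 : ℝ) ≤ |(s * t : ℤ)| := by
    intro s t hs ht
    exact_mod_cast Int.one_le_abs (mul_ne_zero hs ht)
  have ub : ∀ s t : ℤ, |s * t| ≤ 3 → ((|s * t| : ℤ) : ℝ) ≤ 3 := fun s t h => by
    exact_mod_cast h
  have hcyc : 0 < pairing u v * pairing v w * pairing w u := by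
    apply sign_cycle hind
    · rw [e1]; exact lb p p' hpne hp'ne
    · rw [e1]; exact ub p p' hb1
    · rw [e2]; exact lb r' r hr'ne hrne
    · rw [e2]; exact ub r' r hb3
    · rw [e3]; exact lb q' q hq'ne hqne
    · rw [e3]; exact ub q' q hb2
  have h2pos : (0:ℝ) < |(r' * r : ℤ)| := lt_of_lt_of_le one_pos (lb r' r hr'ne hrne)
  have h3pos : (0:ℝ) < |(q' * q : ℤ)| := lt_of_lt_of_le one_pos (lb q' q hq'ne hqne)
  have hA : 0 < pairing u v * (pairing u w * pairing w v) := by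
    have hid : (pairing u v * (pairing u w * pairing w v)) *
        ((pairing v w * pairing w u) ^ 2) =
        (pairing u v * pairing v w * pairing w u) * (pairing w u * pairing u w) *
          (pairing v w * pairing w v) := by ring
    have hrhs : 0 < (pairing u v * pairing v w * pairing w u) *
        (pairing w u * pairing u w) * (pairing v w * pairing w v) := by
      apply mul_pos (mul_pos hcyc _) _
      · rw [e3]; exact h3pos
      · rw [e2]; exact h2pos
    have hvwne : pairing v w ≠ 0 := by
      intro hh
      rw [hh, zero_mul] at e2
      exact absurd e2.symm h2pos.ne'
    have hwune : pairing w u ≠ 0 := by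
      intro hh
      rw [hh, zero_mul] at e3
      exact absurd e3.symm h3pos.ne'
    have hsq : 0 < (pairing v w * pairing w u) ^ 2 :=
      pow_two_pos_of_ne_zero (mul_ne_zero hvwne hwune)
    nlinarith [hid, hrhs, hsq]
  rw [abs_sub_same_sign hA, abs_mul, hp, hq, hr, ← abs_mul]

lemma mutateBasis_apply_pos {B : Matrix (Fin n) (Fin n) ℤ} {k i : Fin n}
    {β : Fin n → EuclideanSpace ℝ (Fin n)} (h : 0 < B i k) :
    mutateBasis B k β i = reflRoot (β k) (β i) := by simp [mutateBasis, h]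

lemma mutateBasis_apply_nonpos {B : Matrix (Fin n) (Fin n) ℤ} {k i : Fin n}
    {β : Fin n → EuclideanSpace ℝ (Fin n)} (h : ¬ 0 < B i k) :
    mutateBasis B k β i = β i := by simp [mutateBasis, h]

lemma abs_add_opp_sign {u v : ℝ} (h : u * v < 0) : |(|u| - |v|)| = |u + v| := by
  rcases mul_neg_iff.mp h with ⟨h1, h2⟩ | ⟨h1, h2⟩
  · rw [abs_of_pos h1, abs_of_neg h2, show u - -v = u + v by ring]
  · rw [abs_of_neg h1, abs_of_pos h2, show -u - v = -(u + v) by ring, abs_neg]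

lemma sign_nonneg_flip {B : Matrix (Fin n) (Fin n) ℤ} {d : Fin n → ℤ} (hd : ∀ i, 0 < d i)
    (hB : ∀ i j, d i * B i j = -(d j * B j i)) {i j : Fin n} (h : 0 ≤ B i j) :
    B j i ≤ 0 := by
  rcases h.lt_or_eq with h' | h'
  · exact (sign_flip hd hB h').le
  · exact le_of_eq (sign_zero hd hB h'.symm)

set_option maxHeartbeats 1600000 in
lemma step_companion {Φ : Set (EuclideanSpace ℝ (Fin n))} (hΦ : IsRootSystem Φ)
    {X : Matrix (Fin n) (Fin n) ℤ} (k : Fin n)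
    (hsX : IsSkewSymmetrizable X) (hfX : IsFiniteType X)
    {β : Fin n → EuclideanSpace ℝ (Fin n)} (hcb : IsCompanionBasis Φ (mutate k X) β) :
    IsCompanionBasis Φ X (mutateBasis X k β) := by
  obtain ⟨hmem, hindZ, hspan, hpair⟩ := hcb
  obtain ⟨-, hne, hspanΦ, -, hrefl, hcrys⟩ := hΦ
  have hsY := isSkewSymmetrizable_mutate hsX k
  have hfY := isFiniteType_mutate hfX k
  obtain ⟨e, he, hYe⟩ := hsY
  have hXkk : X k k = 0 := diag_zero hsX k
  have hβkΦ : β k ∈ Φ := hmem k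
  have hβk0 : β k ≠ 0 := hne _ hβkΦ
  have hβ0 : ∀ i, β i ≠ 0 := fun i => hne _ (hmem i)
  have hβ'k : mutateBasis X k β k = β k :=
    mutateBasis_apply_nonpos (by rw [hXkk]; exact lt_irrefl 0)
  have hmem' : ∀ i, mutateBasis X k β i ∈ Φ := by
    intro i
    by_cases h : 0 < X i k
    · rw [mutateBasis_apply_pos h]; exact hrefl _ hβkΦ _ (hmem i)
    · rw [mutateBasis_apply_nonpos h]; exact hmem i
  have hcoef : ∀ i, ∃ z : ℤ, pairing (β i) (β k) = (z : ℝ) := fun i =>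
    hcrys (β k) hβkΦ (β i) (hmem i)
  have hspan' : Submodule.span ℤ (Set.range (mutateBasis X k β)) = Submodule.span ℤ Φ := by
    rw [← hspan]
    apply le_antisymm
    · apply Submodule.span_le.mpr
      rintro _ ⟨i, rfl⟩
      by_cases h : 0 < X i k
      · rw [mutateBasis_apply_pos h]
        obtain ⟨z, hz⟩ := hcoef i
        rw [reflRoot, hz, Int.cast_smul_eq_zsmul]
        exact Submodule.sub_mem _ (Submodule.subset_span ⟨i, rfl⟩)
          (Submodule.smul_mem _ _ (Submodule.subset_span ⟨k, rfl⟩))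
      · rw [mutateBasis_apply_nonpos h]
        exact Submodule.subset_span ⟨i, rfl⟩
    · apply Submodule.span_le.mpr
      rintro _ ⟨i, rfl⟩
      by_cases h : 0 < X i k
      · obtain ⟨z, hz⟩ := hcoef i
        have hrw : β i = mutateBasis X k β i + z • mutateBasis X k β k := by
          rw [mutateBasis_apply_pos h, hβ'k, reflRoot, hz, Int.cast_smul_eq_zsmul]
          abel
        rw [hrw]
        exact Submodule.add_mem _ (Submodule.subset_span ⟨i, rfl⟩)
          (Submodule.smul_mem _ _ (Submodule.subset_span ⟨k, rfl⟩))
      · rw [← mutateBasis_apply_nonpos (β := β) h]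
        exact Submodule.subset_span ⟨i, rfl⟩
  refine ⟨hmem', zindep_of_span_eq hspanΦ hspan', hspan', ?_⟩
  have hindR : LinearIndependent ℝ β := indep_of_span_eq hspanΦ hspan
  intro i j hij
  by_cases hik : i = k
  · -- i = k
    rw [hik]
    have hkj : k ≠ j := by rw [← hik]; exact hij
    have hthis : |pairing (β k) (β j)| = |(X k j : ℝ)| := by
      have h' := hpair k j hkj
      rw [mutate_apply_k _ (Or.inl rfl)] at h'
      rw [h']
      push_cast
      rw [abs_neg]
    by_cases h : 0 < X j k
    · rw [mutateBasis_apply_pos h, hβ'k]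
      have hval : pairing (β k) (reflRoot (β k) (β j)) = -pairing (β k) (β j) := by
        rw [pairing_reflRoot_right hβk0 (hβ0 j), pairing_self hβk0]
        ring
      rw [hval, abs_neg]
      exact hthis
    · rw [mutateBasis_apply_nonpos h, hβ'k]
      exact hthis
  by_cases hjk : j = k
  · -- j = k
    rw [hjk]
    have hik' : i ≠ k := fun h => hik h
    have hthis : |pairing (β i) (β k)| = |(X i k : ℝ)| := by
      have h' := hpair i k hik'
      rw [mutate_apply_k _ (Or.inr rfl)] at h'
      rw [h']
      push_cast
      rw [abs_neg]
    by_cases h : 0 < X i k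
    · rw [mutateBasis_apply_pos h, hβ'k]
      have hval : pairing (reflRoot (β k) (β i)) (β k) = -pairing (β i) (β k) := by
        rw [pairing_reflRoot_left hβk0 hβk0, pairing_self hβk0]
        ring
      rw [hval, abs_neg]
      exact hthis
    · rw [mutateBasis_apply_nonpos h, hβ'k]
      exact hthis
  -- main case : i ≠ k, j ≠ k
  have hXij : X i j = mutate k X i j +
      (|mutate k X i k| * mutate k X k j + mutate k X i k * |mutate k X k j|) / 2 := by
    conv_lhs => rw [← mutate_mutate k X]
    exact mutate_apply_ne _ hik hjk
  have hYik : mutate k X i k = -X i k := mutate_apply_k _ (Or.inr rfl)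
  have hYjk : mutate k X j k = -X j k := mutate_apply_k _ (Or.inr rfl)
  by_cases hi : 0 < X i k <;> by_cases hj : 0 < X j k
  · -- both mutated
    have hYjkneg : mutate k X j k < 0 := by rw [hYjk]; omega
    have hYkjpos : 0 < mutate k X k j := sign_flip' he hYe hYjkneg
    have hYiknp : mutate k X i k ≤ 0 := by rw [hYik]; omega
    rw [half_np_nn hYiknp hYkjpos.le, add_zero] at hXij
    rw [mutateBasis_apply_pos hi, mutateBasis_apply_pos hj,
      pairing_reflRoot_reflRoot hβk0, hXij]
    exact hpair i j hij
  · -- i mutated, j not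
    have hYikneg : mutate k X i k < 0 := by rw [hYik]; omega
    have hYjknn : 0 ≤ mutate k X j k := by rw [hYjk]; omega
    have hYkjnp : mutate k X k j ≤ 0 := sign_nonneg_flip he hYe hYjknn
    rw [half_np_np hYikneg.le hYkjnp] at hXij
    rw [mutateBasis_apply_pos hi, mutateBasis_apply_nonpos hj,
      pairing_reflRoot_left hβk0 (hβ0 j)]
    by_cases h0 : mutate k X k j = 0
    · have hPkj : pairing (β k) (β j) = 0 := by
        have h' := hpair k j (Ne.symm hjk)
        rw [h0] at h'
        push_cast at h'
        rwa [abs_zero, abs_eq_zero] at h'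
      rw [hPkj, mul_zero, sub_zero, hXij, h0, mul_zero, neg_zero, add_zero]
      exact hpair i j hij
    · by_cases h1 : mutate k X i j = 0
      · have hPij : pairing (β i) (β j) = 0 := by
          have h' := hpair i j hij
          rw [h1] at h'
          push_cast at h'
          rwa [abs_zero, abs_eq_zero] at h'
        rw [hPij, zero_sub, abs_neg, abs_mul, hXij, h1, zero_add,
          hpair i k hik, hpair k j (Ne.symm hjk)]
        push_cast
        rw [abs_neg, abs_mul]
      · have hYkjneg : mutate k X k j < 0 := lt_of_le_of_ne hYkjnp h0
        have hYjkpos : 0 < mutate k X j k := sign_flip' he hYe hYkjneg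
        have hYkipos : 0 < mutate k X k i := sign_flip' he hYe hYikneg
        have hYijpos : 0 < mutate k X i j := by
          rcases lt_trichotomy (mutate k X i j) 0 with hlt | heq | hpos
          · exfalso
            have hYji : 0 < mutate k X j i := sign_flip' he hYe hlt
            exact no_source_triangle ⟨e, he, hYe⟩ hfY (Ne.symm hij) hjk hik
              hYji hYjkpos hYkipos
          · exact absurd heq h1
          · exact hpos
        have htriple : LinearIndependent ℝ ![β i, β j, β k] := by
          have hcomp := hindR.comp ![i, j, k] (inj3 hij hik hjk)
          have hfn : β ∘ ![i, j, k] = ![β i, β j, β k] := by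
            ext l
            fin_cases l <;> rfl
          rwa [hfn] at hcomp
        have hcore := mixed_core htriple (hpair i j hij) (hpair j i (Ne.symm hij))
          (hpair i k hik) (hpair k i (Ne.symm hik)) (hpair k j (Ne.symm hjk)) (hpair j k hjk)
          hYijpos.ne' (sign_flip he hYe hYijpos).ne hYikneg.ne hYkipos.ne' hYkjneg.ne
          hYjkpos.ne' (hfY _ Relation.ReflTransGen.refl i j)
          (hfY _ Relation.ReflTransGen.refl k i) (hfY _ Relation.ReflTransGen.refl j k)
        rw [hcore, hXij]
        have hprod : (0:ℝ) < (mutate k X i j : ℝ) *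
            ((mutate k X i k : ℝ) * (mutate k X k j : ℝ)) := by
          have hZ : (0:ℤ) < mutate k X i j * (mutate k X i k * mutate k X k j) :=
            mul_pos hYijpos (mul_pos_of_neg_of_neg hYikneg hYkjneg)
          exact_mod_cast hZ
        rw [← abs_sub_same_sign hprod]
        congr 1
        push_cast
        ring
  · -- j mutated, i not
    have hYiknn : 0 ≤ mutate k X i k := by rw [hYik]; omega
    have hYjkneg : mutate k X j k < 0 := by rw [hYjk]; omega
    have hYkjpos : 0 < mutate k X k j := sign_flip' he hYe hYjkneg
    rw [half_nn_nn hYiknn hYkjpos.le] at hXij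
    rw [mutateBasis_apply_nonpos hi, mutateBasis_apply_pos hj,
      pairing_reflRoot_right hβk0 (hβ0 j)]
    by_cases h0 : mutate k X i k = 0
    · have hPik : pairing (β i) (β k) = 0 := by
        have h' := hpair i k hik
        rw [h0] at h'
        push_cast at h'
        rwa [abs_zero, abs_eq_zero] at h'
      rw [hPik, zero_mul, sub_zero, hXij, h0, zero_mul, add_zero]
      exact hpair i j hij
    · by_cases h1 : mutate k X i j = 0
      · have hPij : pairing (β i) (β j) = 0 := by
          have h' := hpair i j hij
          rw [h1] at h'
          push_cast at h'
          rwa [abs_zero, abs_eq_zero] at h'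
        rw [hPij, zero_sub, abs_neg, abs_mul, hXij, h1, zero_add,
          hpair i k hik, hpair k j (Ne.symm hjk)]
        push_cast
        rw [abs_mul]
      · have hYikpos : 0 < mutate k X i k := lt_of_le_of_ne hYiknn (Ne.symm h0)
        have hYkineg : mutate k X k i < 0 := sign_flip he hYe hYikpos
        have hYijneg : mutate k X i j < 0 := by
          rcases lt_trichotomy (mutate k X i j) 0 with hlt | heq | hpos
          · exact hlt
          · exact absurd heq h1
          · exfalso
            exact no_source_triangle ⟨e, he, hYe⟩ hfY hij hik hjk
              hpos hYikpos hYkjpos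
        have htriple : LinearIndependent ℝ ![β i, β j, β k] := by
          have hcomp := hindR.comp ![i, j, k] (inj3 hij hik hjk)
          have hfn : β ∘ ![i, j, k] = ![β i, β j, β k] := by
            ext l
            fin_cases l <;> rfl
          rwa [hfn] at hcomp
        have hcore := mixed_core htriple (hpair i j hij) (hpair j i (Ne.symm hij))
          (hpair i k hik) (hpair k i (Ne.symm hik)) (hpair k j (Ne.symm hjk)) (hpair j k hjk)
          hYijneg.ne (sign_flip' he hYe hYijneg).ne' hYikpos.ne' hYkineg.ne hYkjpos.ne'
          hYjkneg.ne (hfY _ Relation.ReflTransGen.refl i j)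
          (hfY _ Relation.ReflTransGen.refl k i) (hfY _ Relation.ReflTransGen.refl j k)
        rw [hcore, hXij]
        have hprod : (mutate k X i j : ℝ) *
            ((mutate k X i k : ℝ) * (mutate k X k j : ℝ)) < 0 := by
          have hZ : mutate k X i j * (mutate k X i k * mutate k X k j) < (0:ℤ) :=
            mul_neg_of_neg_of_pos hYijneg (mul_pos hYikpos hYkjpos)
          exact_mod_cast hZ
        rw [abs_add_opp_sign hprod]
        congr 1
        push_cast
        ring
  · -- neither mutated
    have hYiknn : 0 ≤ mutate k X i k := by rw [hYik]; omega
    have hYjknn : 0 ≤ mutate k X j k := by rw [hYjk]; omega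
    have hYkjnp : mutate k X k j ≤ 0 := sign_nonneg_flip he hYe hYjknn
    rw [half_nn_np hYiknn hYkjnp, add_zero] at hXij
    rw [mutateBasis_apply_nonpos hi, mutateBasis_apply_nonpos hj, hXij]
    exact hpair i j hij

/-- Corollary 6.6: every exchange matrix of a cluster algebra of finite type
has a companion basis. -/
theorem companion_basis_exists
    (Φ : Set (EuclideanSpace ℝ (Fin n))) (hΦ : IsRootSystem Φ)
    (B : Matrix (Fin n) (Fin n) ℤ) (hB : IsExchangeMatrix Φ B) :
    ∃ β : Fin n → EuclideanSpace ℝ (Fin n), IsCompanionBasis Φ B β := by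
  obtain ⟨hskew, hfin, B₀, hchain, α, hbase, hcartan⟩ := hB
  have main : ∀ X : Matrix (Fin n) (Fin n) ℤ, Relation.ReflTransGen Mutation X B₀ →
      IsSkewSymmetrizable X → IsFiniteType X → ∃ β, IsCompanionBasis Φ X β := by
    intro X hX
    induction hX using Relation.ReflTransGen.head_induction_on with
    | refl => exact fun _ _ => ⟨α, base_companion hΦ hbase hcartan⟩
    | head hstep htail ih =>
        intro hsa hfa
        obtain ⟨k, rfl⟩ := hstep
        obtain ⟨β, hβ⟩ := ih (isSkewSymmetrizable_mutate hsa k) (isFiniteType_mutate hfa k)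
        exact ⟨mutateBasis _ k β, step_companion hΦ k hsa hfa hβ⟩
  exact main B hchain hskew hfin

end ClusterReflection
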